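/- Let K be a field equipped with a nonarchimedean absolute value |·| : K → ℝ with |2| = 1, let t ∈ K satisfy 0 < |t| < 1, and set f(a) = (a² − t)²/(4a(a−1)(a−t)). Then: (i) if |a| > 1, then |f(a)| = |a|; (ii) if |a| = 1 and |a − 1| = 1, then |f(a)| = 1; (iii) if |a| = 1, a ≠ 1, and |a − 1| < 1, then |f(a)| = |a − 1|^{-1} > 1. -/

import Mathlib

private lemma nonarch_add_eq {K : Type*} [Field K] (v : AbsoluteValue K ℝ)
    (hna : IsNonarchimedean v) {x y : K} (h : v y < v x) : v (x + y) = v x := by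
  have h1 : v (x + y) ≤ v x := (hna x y).trans_eq (max_eq_left h.le)
  have h2 : v x ≤ max (v (x + y)) (v y) := by
    have := hna (x + y) (-y)
    simpa using this
  refine le_antisymm h1 ?_
  rcases le_max_iff.mp h2 with h3 | h3
  · exact h3
  · exact absurd h3 (not_le.mpr h)

private lemma nonarch_sub_eq {K : Type*} [Field K] (v : AbsoluteValue K ℝ)
    (hna : IsNonarchimedean v) {x y : K} (h : v y < v x) : v (x - y) = v x := by
  have : v (-y) < v x := by simpa using h
  simpa [sub_eq_add_neg] using nonarch_add_eq v hna this

/-- For a field `K` with a nonarchimedean absolute value `v` with `v 2 = 1`, `t ∈ K` with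
`0 < v t < 1`, and `f a = (a² - t)² / (4a(a-1)(a-t))`:
(i) if `v a > 1` then `v (f a) = v a`;
(ii) if `v a = 1` and `v (a - 1) = 1` then `v (f a) = 1`;
(iii) if `v a = 1`, `a ≠ 1` and `v (a - 1) < 1` then `v (f a) = (v (a - 1))⁻¹ > 1`. -/
theorem lattes_tent_boundary {K : Type*} [Field K] (v : AbsoluteValue K ℝ)
    (hna : IsNonarchimedean v) (h2 : v 2 = 1) (t : K) (ht0 : 0 < v t) (ht1 : v t < 1)
    (f : K → K) (hf : ∀ a, f a = (a ^ 2 - t) ^ 2 / (4 * a * (a - 1) * (a - t))) :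
    (∀ a : K, 1 < v a → v (f a) = v a) ∧
    (∀ a : K, v a = 1 → v (a - 1) = 1 → v (f a) = 1) ∧
    (∀ a : K, v a = 1 → a ≠ 1 → v (a - 1) < 1 →
      v (f a) = (v (a - 1))⁻¹ ∧ 1 < v (f a)) := by
  have hv4 : v 4 = 1 := by
    have : (4 : K) = 2 * 2 := by norm_num
    rw [this, map_mul, h2, mul_one]
  have hv1 : v 1 = 1 := map_one v
  have key : ∀ a : K, v (f a) =
      v (a ^ 2 - t) ^ 2 / (v 4 * v a * v (a - 1) * v (a - t)) := by
    intro a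
    rw [hf a, map_div₀, map_pow, map_mul, map_mul, map_mul]
  refine ⟨?_, ?_, ?_⟩
  · intro a ha
    have ha0 : (0 : ℝ) < v a := lt_trans one_pos ha
    have ha2 : v (a ^ 2) = v a ^ 2 := map_pow v a 2
    have hsq : v t < v (a ^ 2) := by
      rw [ha2]
      nlinarith
    have e1 : v (a ^ 2 - t) = v a ^ 2 := by
      rw [nonarch_sub_eq v hna hsq, ha2]
    have e2 : v (a - 1) = v a := nonarch_sub_eq v hna (by rw [hv1]; exact ha)
    have e3 : v (a - t) = v a := nonarch_sub_eq v hna (lt_trans ht1 ha)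
    rw [key a, e1, e2, e3, hv4]
    field_simp
  · intro a ha h1
    have e3 : v (a - t) = 1 := by rw [nonarch_sub_eq v hna (by rw [ha]; exact ht1), ha]
    have e1 : v (a ^ 2 - t) = 1 := by
      rw [nonarch_sub_eq v hna (by rw [map_pow, ha]; simpa using ht1), map_pow, ha, one_pow]
    rw [key a, e1, hv4, ha, h1, e3]
    norm_num
  · intro a ha hne h1
    have hpos : 0 < v (a - 1) := v.pos (sub_ne_zero.mpr hne)
    have e3 : v (a - t) = 1 := by rw [nonarch_sub_eq v hna (by rw [ha]; exact ht1), ha]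
    have hap1 : v (a + 1) = 1 := by
      have : a + 1 = 2 + (a - 1) := by ring
      rw [this, nonarch_add_eq v hna (by rw [h2]; exact h1), h2]
    have hsq1 : v (a ^ 2 - 1) = v (a - 1) := by
      have : a ^ 2 - 1 = (a - 1) * (a + 1) := by ring
      rw [this, map_mul, hap1, mul_one]
    have h1t : v (1 - t) = 1 := by rw [nonarch_sub_eq v hna (by rw [hv1]; exact ht1), hv1]
    have e1 : v (a ^ 2 - t) = 1 := by
      have : a ^ 2 - t = (1 - t) + (a ^ 2 - 1) := by ring
      rw [this, nonarch_add_eq v hna (by rw [hsq1, h1t]; exact h1), h1t]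
    have heq : v (f a) = (v (a - 1))⁻¹ := by
      rw [key a, e1, hv4, ha, e3]
      field_simp
    exact ⟨heq, by rw [heq]; exact (one_lt_inv₀ hpos).mpr h1⟩
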